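/- Let n ≥ 1, h = 1/(16√n), and suppose A has full row rank, (x, s) ∈ P° × D°, t > 0, and ‖xs − t·1‖₂ ≤ t/4. Let t' satisfy t/(1+h) ≤ t' ≤ t, set μ = xs, δ_μ = t'·1 − μ, and let δ_x = X(I − P_proj)(δ_μ/μ), δ_s = S P_proj(δ_μ/μ). Then x' = x + δ_x and s' = s + δ_s satisfy (x', s') ∈ P° × D° and ‖x's' − t'·1‖₂ ≤ t'/6. -/

import Mathlib

open Matrix

set_option maxHeartbeats 4000000 in
/-- Scalar part of the short-step IPM analysis. -/
theorem L2Step_scalar_aux {n : ℕ} (hn : 1 ≤ n)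
    (x s δx δs δμ : Fin n → ℝ) (t t' : ℝ) (ht : 0 < t)
    (hxpos : ∀ i, 0 < x i) (hspos : ∀ i, 0 < s i)
    (hsum_sq : ∑ i, (x i * s i - t)^2 ≤ (t/4)^2)
    (ht'1 : t / (1 + 1 / (16 * Real.sqrt n)) ≤ t') (ht'2 : t' ≤ t)
    (hδμ : δμ = fun i => t' - x i * s i)
    (hkey1 : ∀ i, s i * δx i + x i * δs i = δμ i)
    (horth : ∑ i, δx i * δs i = 0) :
    (∀ i, 0 < x i + δx i) ∧ (∀ i, 0 < s i + δs i) ∧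
      ∑ i, (δx i * δs i)^2 ≤ (t'/6)^2 := by
  have hμpos : ∀ i, 0 < x i * s i := fun i => mul_pos (hxpos i) (hspos i)
  have hμlb : ∀ i, 3/4 * t ≤ x i * s i := by
    intro i
    have h1 : (x i * s i - t)^2 ≤ (t/4)^2 :=
      le_trans (Finset.single_le_sum (f := fun j => (x j * s j - t)^2)
        (fun j _ => sq_nonneg _) (Finset.mem_univ i)) hsum_sq
    nlinarith
  set r : ℝ := Real.sqrt n with hr
  have hr2 : r^2 = n := Real.sq_sqrt (Nat.cast_nonneg n)
  have hrpos : 1 ≤ r := by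
    have h1 : (1:ℝ) ≤ (n:ℝ) := by exact_mod_cast hn
    nlinarith [Real.sqrt_nonneg (n:ℝ)]
  have hu0 : 0 < 1/(16*r) := by positivity
  have huu : 1/(16*r) ≤ 1/16 := by
    rw [div_le_div_iff₀ (by linarith) (by norm_num)]
    nlinarith
  have hhpos : 0 < 1 + 1/(16*r) := by linarith
  have ht'pos : 0 < t' := lt_of_lt_of_le (by positivity) ht'1
  have hkey0 : t - t * (1/(16*r)) ≤ t / (1 + 1/(16*r)) := by
    rw [le_div_iff₀ hhpos]
    nlinarith [mul_nonneg ht.le (sq_nonneg (1/(16*r)))]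
  have hε : t - t' ≤ t/(16*r) := by
    have h2 : t - t' ≤ t * (1/(16*r)) := by linarith [le_trans hkey0 ht'1]
    rwa [mul_one_div] at h2
  have ht'lb : 16/17 * t ≤ t' := by
    have h2 : t * (1/(16*r)) ≤ t * (1/16) := mul_le_mul_of_nonneg_left huu ht.le
    have h1 : 16/17 * t ≤ t / (1 + 1/(16*r)) := by
      rw [le_div_iff₀ hhpos]
      nlinarith [h2]
    linarith [le_trans h1 ht'1]
  have hεr : 16 * r * (t - t') ≤ t := by
    have h2 : 16 * r * (t - t') ≤ 16 * r * (t/(16*r)) :=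
      mul_le_mul_of_nonneg_left hε (by linarith)
    have h3 : 16 * r * (t/(16*r)) = t := by field_simp
    linarith
  have hε0 : 0 ≤ t - t' := by linarith
  -- bound on ∑ δμ²
  set E : ℝ := ∑ i, (t - x i * s i) with hE
  have hsum_sq' : ∑ i, (t - x i * s i)^2 ≤ (t/4)^2 := by
    have h0 : ∀ i, (t - x i * s i)^2 = (x i * s i - t)^2 := fun i => by ring
    rw [Finset.sum_congr rfl fun i _ => h0 i]
    exact hsum_sq
  have hE2 : E^2 ≤ (t/4 * r)^2 := by
    have hcs := Finset.sum_mul_sq_le_sq_mul_sq Finset.univ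
      (fun i => t - x i * s i) (fun _ => (1:ℝ))
    simp only [mul_one, one_pow] at hcs
    have hsum1 : ∑ _i : Fin n, (1:ℝ) = n := by simp
    rw [hsum1] at hcs
    calc E^2 ≤ (∑ i, (t - x i * s i)^2) * n := hcs
      _ ≤ (t/4)^2 * r^2 := by
          rw [hr2]; exact mul_le_mul_of_nonneg_right hsum_sq' (Nat.cast_nonneg n)
      _ = (t/4 * r)^2 := by ring
  have habsE : |E| ≤ t/4 * r := by
    have hc : (0:ℝ) ≤ t/4 * r := by nlinarith
    rw [abs_le]
    constructor <;> nlinarith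
  have hδμsq : ∑ i, (δμ i)^2 ≤ 25/256 * t^2 := by
    have hexp : ∑ i, (δμ i)^2
        = ∑ i, (t - x i * s i)^2 - 2*(t-t')*E + n*(t-t')^2 := by
      have h0 : ∀ i, (δμ i)^2
          = (t - x i * s i)^2 - 2*(t-t')*(t - x i * s i) + (t-t')^2 := by
        intro i; rw [hδμ]; ring
      rw [Finset.sum_congr rfl fun i _ => h0 i]
      rw [Finset.sum_add_distrib, Finset.sum_sub_distrib, ← Finset.mul_sum,
        Finset.sum_const, Finset.card_univ, Fintype.card_fin, nsmul_eq_mul, hE]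
    have h3 : (n:ℝ)*(t-t')^2 ≤ t^2/256 := by
      have h5 : (16 * r * (t-t'))^2 ≤ t^2 := by
        nlinarith [hεr, hε0, mul_nonneg (mul_nonneg (by norm_num : (0:ℝ) ≤ 16)
          (by linarith : (0:ℝ) ≤ r)) hε0]
      nlinarith [hr2, sq_nonneg (t - t')]
    have h4 : -(2*(t-t')*E) ≤ t^2/32 := by
      have h5 : -E ≤ t/4 * r := by
        have := (abs_le.mp habsE).1; linarith
      have h6 : 2*(t-t')*(t/4*r) ≤ t^2/32 := by nlinarith
      nlinarith [mul_le_mul_of_nonneg_left h5 (by linarith : (0:ℝ) ≤ 2*(t-t'))]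
    nlinarith [hsum_sq']
  -- K = ∑ δμ²/μ
  set K : ℝ := ∑ i, (δμ i)^2 / (x i * s i) with hK
  have hK0 : 0 ≤ K := Finset.sum_nonneg fun i _ => div_nonneg (sq_nonneg _) (hμpos i).le
  have hKle : K ≤ 25/192 * t := by
    have h1 : ∀ i, (δμ i)^2 / (x i * s i) ≤ (δμ i)^2 / (3/4*t) := fun i =>
      div_le_div_of_nonneg_left (sq_nonneg _) (by linarith) (hμlb i)
    calc K ≤ ∑ i, (δμ i)^2 / (3/4*t) := Finset.sum_le_sum fun i _ => h1 i
      _ = (∑ i, (δμ i)^2) / (3/4*t) := by rw [Finset.sum_div]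
      _ ≤ (25/256 * t^2) / (3/4*t) := by gcongr
      _ = 25/192 * t := by field_simp; ring
  -- product bound via AM-GM
  have hprod : ∑ i, (δx i * δs i)^2 ≤ (K/2)^2 := by
    set a : Fin n → ℝ := fun i => s i / x i * (δx i)^2 with ha
    set bb : Fin n → ℝ := fun i => x i / s i * (δs i)^2 with hbb
    have ha0 : ∀ i, 0 ≤ a i := fun i =>
      mul_nonneg (div_nonneg (hspos i).le (hxpos i).le) (sq_nonneg _)
    have hb0 : ∀ i, 0 ≤ bb i := fun i =>
      mul_nonneg (div_nonneg (hxpos i).le (hspos i).le) (sq_nonneg _)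
    have hab : ∀ i, a i * bb i = (δx i * δs i)^2 := by
      intro i
      rw [ha, hbb]
      have hx0 := (hxpos i).ne'
      have hs0 := (hspos i).ne'
      field_simp
    have habsum : ∀ i, a i + bb i = (δμ i)^2/(x i * s i) - 2*(δx i * δs i) := by
      intro i
      rw [ha, hbb, ← hkey1 i]
      have hx0 := (hxpos i).ne'
      have hs0 := (hspos i).ne'
      field_simp
      ring
    have hsab : (∑ i, a i) + (∑ i, bb i) = K := by
      rw [← Finset.sum_add_distrib, Finset.sum_congr rfl fun i _ => habsum i,
        Finset.sum_sub_distrib, ← Finset.mul_sum, horth, hK]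
      ring
    have hsa0 : 0 ≤ ∑ i, a i := Finset.sum_nonneg fun i _ => ha0 i
    have hsb0 : 0 ≤ ∑ i, bb i := Finset.sum_nonneg fun i _ => hb0 i
    have h1 : ∑ i, (δx i * δs i)^2 ≤ (∑ i, a i) * (∑ i, bb i) := by
      rw [← Finset.sum_congr rfl fun i _ => hab i]
      calc ∑ i, a i * bb i ≤ ∑ i, a i * (∑ j, bb j) := by
            apply Finset.sum_le_sum
            intro i _
            exact mul_le_mul_of_nonneg_left
              (Finset.single_le_sum (fun j _ => hb0 j) (Finset.mem_univ i)) (ha0 i)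
        _ = (∑ i, a i) * (∑ j, bb j) := by rw [← Finset.sum_mul]
    nlinarith [sq_nonneg ((∑ i, a i) - (∑ i, bb i))]
  have hDsq : ∀ i, (δx i * δs i)^2 ≤ (25/384 * t)^2 := by
    intro i
    have h1 : (δx i * δs i)^2 ≤ (K/2)^2 :=
      le_trans (Finset.single_le_sum (f := fun j => (δx j * δs j)^2)
        (fun j _ => sq_nonneg _) (Finset.mem_univ i)) hprod
    nlinarith
  have hDlb : ∀ i, -(25/384 * t) ≤ δx i * δs i := by
    intro i
    nlinarith [hDsq i]
  -- positivity along the segment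
  have hquad : ∀ i, ∀ α : ℝ, 0 ≤ α → α ≤ 1 →
      0 < (x i + α * δx i) * (s i + α * δs i) := by
    intro i α h0 h1
    have hexp : (x i + α * δx i) * (s i + α * δs i)
        = x i * s i + α * (s i * δx i + x i * δs i) + α^2 * (δx i * δs i) := by ring
    have hδμi : δμ i = t' - x i * s i := by rw [hδμ]
    rw [hexp, hkey1 i, hδμi]
    have hα2 : α^2 ≤ 1 := by nlinarith
    have hαD : -(25/384*t) ≤ α^2 * (δx i * δs i) := by
      rcases le_or_gt 0 (δx i * δs i) with h | h
      · nlinarith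
      · nlinarith [hDlb i]
    nlinarith [hμlb i, ht'lb]
  refine ⟨?_, ?_, ?_⟩
  · intro i
    by_contra hcon
    push_neg at hcon
    have hδxneg : δx i < 0 := by nlinarith [hxpos i]
    set α : ℝ := x i / (-δx i) with hα
    have hα0 : 0 < α := div_pos (hxpos i) (by linarith)
    have hα1 : α ≤ 1 := by
      rw [hα, div_le_one (by linarith)]
      linarith
    have hzero : x i + α * δx i = 0 := by
      rw [hα, div_mul_eq_mul_div, div_neg, mul_div_cancel_right₀ _ hδxneg.ne,
        add_neg_cancel]
    have := hquad i α hα0.le hα1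
    rw [hzero, zero_mul] at this
    exact lt_irrefl 0 this
  · intro i
    by_contra hcon
    push_neg at hcon
    have hδsneg : δs i < 0 := by nlinarith [hspos i]
    set α : ℝ := s i / (-δs i) with hα
    have hα0 : 0 < α := div_pos (hspos i) (by linarith)
    have hα1 : α ≤ 1 := by
      rw [hα, div_le_one (by linarith)]
      linarith
    have hzero : s i + α * δs i = 0 := by
      rw [hα, div_mul_eq_mul_div, div_neg, mul_div_cancel_right₀ _ hδsneg.ne,
        add_neg_cancel]
    have := hquad i α hα0.le hα1
    rw [hzero, mul_zero] at this
    exact lt_irrefl 0 this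
  · have h2 : K/2 ≤ 25/384 * t := by linarith
    have h3 : 25/384 * t ≤ t'/6 := by linarith
    nlinarith [hprod, hK0]


/-- The projection-like matrix `P = S⁻¹Aᵀ(A S⁻¹ X Aᵀ)⁻¹ A X`. -/
noncomputable def Pproj {d n : ℕ} (A : Matrix (Fin d) (Fin n) ℝ) (x s : Fin n → ℝ) :
    Matrix (Fin n) (Fin n) ℝ :=
  (Matrix.diagonal s)⁻¹ * Aᵀ * (A * (Matrix.diagonal s)⁻¹ * Matrix.diagonal x * Aᵀ)⁻¹ *
    A * Matrix.diagonal x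

/-- The ℓ2 norm. -/
noncomputable def l2 {n : ℕ} (u : Fin n → ℝ) : ℝ := Real.sqrt (∑ i, (u i) ^ 2)

set_option maxHeartbeats 2000000 in
/-- One `L2Step` of the short-step interior point method: if `‖xs − t·1‖₂ ≤ t/4`
and `t/(1+h) ≤ t' ≤ t` with `h = 1/(16√n)`, then the Newton step to `t'`
stays strictly feasible and satisfies `‖x's' − t'·1‖₂ ≤ t'/6`. -/
theorem L2Step_invariant {d n : ℕ} (hn : 1 ≤ n)
    (A : Matrix (Fin d) (Fin n) ℝ) (b : Fin d → ℝ) (c : Fin n → ℝ)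
    (hA : A.rank = d)
    (x s : Fin n → ℝ) (t t' : ℝ) (ht : 0 < t)
    (hx : A.mulVec x = b ∧ ∀ i, 0 < x i)
    (hs : (∃ y : Fin d → ℝ, Aᵀ.mulVec y + s = c) ∧ ∀ i, 0 < s i)
    (hclose : l2 (fun i => x i * s i - t) ≤ t / 4)
    (ht'1 : t / (1 + 1 / (16 * Real.sqrt n)) ≤ t') (ht'2 : t' ≤ t)
    (δμ : Fin n → ℝ) (hδμ : δμ = fun i => t' - x i * s i)
    (δx δs : Fin n → ℝ)
    (hδx : δx = (Matrix.diagonal x).mulVec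
      (((1 : Matrix (Fin n) (Fin n) ℝ) - Pproj A x s).mulVec
        (fun i => δμ i / (x i * s i))))
    (hδs : δs = (Matrix.diagonal s).mulVec
      ((Pproj A x s).mulVec (fun i => δμ i / (x i * s i)))) :
    (A.mulVec (x + δx) = b ∧ ∀ i, 0 < x i + δx i) ∧
    ((∃ y : Fin d → ℝ, Aᵀ.mulVec y + (s + δs) = c) ∧ ∀ i, 0 < s i + δs i) ∧
    l2 (fun i => (x i + δx i) * (s i + δs i) - t') ≤ t' / 6 := by
  obtain ⟨hxA, hxpos⟩ := hx
  obtain ⟨⟨y, hy⟩, hspos⟩ := hs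
  set w : Fin n → ℝ := fun i => δμ i / (x i * s i) with hw
  set P := Pproj A x s with hP
  set M := A * (Matrix.diagonal s)⁻¹ * Matrix.diagonal x * Aᵀ with hM
  -- basic diagonal matrix facts
  have hSinv : (Matrix.diagonal s)⁻¹ = Matrix.diagonal (fun i => (s i)⁻¹) := by
    apply Matrix.inv_eq_right_inv
    rw [Matrix.diagonal_mul_diagonal]
    convert Matrix.diagonal_one with i
    exact mul_inv_cancel₀ (hspos i).ne'
  have hcomm : Matrix.diagonal x * (Matrix.diagonal s)⁻¹
      = (Matrix.diagonal s)⁻¹ * Matrix.diagonal x := by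
    rw [hSinv, Matrix.diagonal_mul_diagonal, Matrix.diagonal_mul_diagonal]
    exact congrArg Matrix.diagonal (funext fun i => mul_comm _ _)
  -- M is invertible
  have hinjA : Function.Injective A.vecMul := by
    rw [Matrix.vecMul_injective_iff]
    rw [linearIndependent_iff_card_eq_finrank_span, Fintype.card_fin]
    have h := A.rank_eq_finrank_span_row
    rw [hA] at h; exact h
  have hMeq : M = A * Matrix.diagonal (fun i => (s i)⁻¹ * x i) * Aᵀ := by
    rw [hM, hSinv, Matrix.mul_assoc A, Matrix.diagonal_mul_diagonal]
  have hMunit : IsUnit (A * Matrix.diagonal (fun i => (s i)⁻¹ * x i) * Aᵀ) := by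
    set g : Fin n → ℝ := fun i => (s i)⁻¹ * x i with hg
    have hgpos : ∀ i, 0 < g i := fun i => mul_pos (inv_pos.mpr (hspos i)) (hxpos i)
    rw [← Matrix.mulVec_injective_iff_isUnit]
    have key : ∀ z : Fin d → ℝ, (A * Matrix.diagonal g * Aᵀ).mulVec z = 0 → z = 0 := by
      intro z hz
      have h1 : z ⬝ᵥ ((A * Matrix.diagonal g * Aᵀ) *ᵥ z) = 0 := by
        rw [hz, dotProduct_zero]
      have h2 : z ⬝ᵥ ((A * Matrix.diagonal g * Aᵀ) *ᵥ z)
          = ∑ i, g i * ((Aᵀ *ᵥ z) i)^2 := by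
        rw [← Matrix.mulVec_mulVec, ← Matrix.mulVec_mulVec,
          Matrix.dotProduct_mulVec, ← Matrix.mulVec_transpose]
        simp only [dotProduct, Matrix.mulVec_diagonal]
        exact Finset.sum_congr rfl fun i _ => by ring
      rw [h2] at h1
      have h3 : ∀ i, (Aᵀ *ᵥ z) i = 0 := by
        intro i
        have hterm := (Finset.sum_eq_zero_iff_of_nonneg
          (fun j _ => mul_nonneg (hgpos j).le (sq_nonneg _))).mp h1 i (Finset.mem_univ i)
        have h5 : ((Aᵀ *ᵥ z) i)^2 = 0 := by
          rcases mul_eq_zero.mp hterm with h | h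
          · exact absurd h (hgpos i).ne'
          · exact h
        exact pow_eq_zero_iff (by norm_num) |>.mp h5
      have h4 : z ᵥ* A = 0 := by
        funext j
        have := h3 j
        rwa [Matrix.mulVec_transpose] at this
      exact hinjA (h4.trans (Matrix.zero_vecMul A).symm)
    intro u v huv
    have h0 : (A * Matrix.diagonal g * Aᵀ) *ᵥ (u - v) = 0 := by
      rw [Matrix.mulVec_sub, huv, sub_self]
    exact sub_eq_zero.mp (key _ h0)
  have hMdet : IsUnit M.det := by
    rw [← Matrix.isUnit_iff_isUnit_det, hMeq]; exact hMunit
  -- projection identities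
  have hAXP : A * Matrix.diagonal x * P = A * Matrix.diagonal x := by
    show A * Matrix.diagonal x *
      ((Matrix.diagonal s)⁻¹ * Aᵀ * M⁻¹ * A * Matrix.diagonal x) = A * Matrix.diagonal x
    calc A * Matrix.diagonal x *
        ((Matrix.diagonal s)⁻¹ * Aᵀ * M⁻¹ * A * Matrix.diagonal x)
        = (A * (Matrix.diagonal x * (Matrix.diagonal s)⁻¹) * Aᵀ) * M⁻¹ *
            (A * Matrix.diagonal x) := by
          simp only [Matrix.mul_assoc]
      _ = M * M⁻¹ * (A * Matrix.diagonal x) := by rw [hcomm, hM]; simp only [Matrix.mul_assoc]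
      _ = A * Matrix.diagonal x := by rw [Matrix.mul_nonsing_inv _ hMdet, Matrix.one_mul]
  have hSP : Matrix.diagonal s * P = Aᵀ * (M⁻¹ * A * Matrix.diagonal x) := by
    show Matrix.diagonal s * ((Matrix.diagonal s)⁻¹ * Aᵀ * M⁻¹ * A * Matrix.diagonal x) = _
    have hSS : Matrix.diagonal s * (Matrix.diagonal s)⁻¹ = 1 := by
      rw [hSinv, Matrix.diagonal_mul_diagonal]
      convert Matrix.diagonal_one with i
      exact mul_inv_cancel₀ (hspos i).ne'
    calc Matrix.diagonal s * ((Matrix.diagonal s)⁻¹ * Aᵀ * M⁻¹ * A * Matrix.diagonal x)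
        = (Matrix.diagonal s * (Matrix.diagonal s)⁻¹) *
            (Aᵀ * (M⁻¹ * (A * Matrix.diagonal x))) := by
          simp only [Matrix.mul_assoc]
      _ = Aᵀ * (M⁻¹ * A * Matrix.diagonal x) := by
          rw [hSS, Matrix.one_mul]; simp only [Matrix.mul_assoc]
  -- Newton equation componentwise
  have hμpos : ∀ i, 0 < x i * s i := fun i => mul_pos (hxpos i) (hspos i)
  have hkey1 : ∀ i, s i * δx i + x i * δs i = δμ i := by
    intro i
    have h1 := congrFun hδx i
    have h2 := congrFun hδs i
    simp only [Matrix.mulVec_diagonal] at h1 h2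
    rw [h1, h2]
    have h3 : ((1 - P) *ᵥ w) i + (P *ᵥ w) i = w i := by
      rw [Matrix.sub_mulVec, Matrix.one_mulVec]; simp
    have h4 : s i * (x i * ((1 - P) *ᵥ w) i) + x i * (s i * (P *ᵥ w) i)
        = (x i * s i) * (((1 - P) *ᵥ w) i + (P *ᵥ w) i) := by ring
    rw [h4, h3]
    have h5 : w i = δμ i / (x i * s i) := by rw [hw]
    rw [h5, mul_comm]
    exact div_mul_cancel₀ _ (hμpos i).ne'
  -- A δx = 0
  have hAδx : A *ᵥ δx = 0 := by
    rw [hδx, Matrix.mulVec_mulVec, Matrix.mulVec_mulVec]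
    have h0 : A * Matrix.diagonal x * (1 - P) = 0 := by
      rw [Matrix.mul_sub, Matrix.mul_one, hAXP, sub_self]
    rw [h0, Matrix.zero_mulVec]
  -- δs is in the range of Aᵀ
  have hδsAt : δs = Aᵀ *ᵥ ((M⁻¹ * A * Matrix.diagonal x) *ᵥ w) := by
    rw [hδs, Matrix.mulVec_mulVec, hSP, ← Matrix.mulVec_mulVec]
  -- orthogonality
  have horth : ∑ i, δx i * δs i = 0 := by
    have h0 : ∑ i, δx i * δs i = δx ⬝ᵥ δs := rfl
    rw [h0, hδsAt, Matrix.dotProduct_mulVec, Matrix.vecMul_transpose, hAδx,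
      zero_dotProduct]
  have hsum_sq : ∑ i, (x i * s i - t)^2 ≤ (t/4)^2 := by
    have h0 : (0:ℝ) ≤ ∑ i, (x i * s i - t)^2 :=
      Finset.sum_nonneg fun i _ => sq_nonneg _
    have h1 : Real.sqrt (∑ i, (x i * s i - t)^2) ≤ t/4 := hclose
    calc ∑ i, (x i * s i - t)^2
        = (Real.sqrt (∑ i, (x i * s i - t)^2))^2 := (Real.sq_sqrt h0).symm
      _ ≤ (t/4)^2 := pow_le_pow_left₀ (Real.sqrt_nonneg _) h1 2
  obtain ⟨hxpos', hspos', hfin⟩ := L2Step_scalar_aux hn x s δx δs δμ t t' ht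
    hxpos hspos hsum_sq ht'1 ht'2 hδμ hkey1 horth
  refine ⟨⟨?_, hxpos'⟩, ⟨⟨y - (M⁻¹ * A * Matrix.diagonal x) *ᵥ w, ?_⟩, hspos'⟩, ?_⟩
  · rw [Matrix.mulVec_add, hAδx, add_zero, hxA]
  · rw [Matrix.mulVec_sub]
    have h0 : s + δs = s + Aᵀ *ᵥ ((M⁻¹ * A * Matrix.diagonal x) *ᵥ w) := by rw [← hδsAt]
    rw [h0]
    have h1 : Aᵀ *ᵥ y - Aᵀ *ᵥ ((M⁻¹ * A * Matrix.diagonal x) *ᵥ w)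
        + (s + Aᵀ *ᵥ ((M⁻¹ * A * Matrix.diagonal x) *ᵥ w)) = Aᵀ *ᵥ y + s := by
      abel
    rw [h1, hy]
  · have hres : ∀ i, ((x i + δx i) * (s i + δs i) - t')^2 = (δx i * δs i)^2 := by
      intro i
      have hδμi : δμ i = t' - x i * s i := by rw [hδμ]
      have h0 : (x i + δx i) * (s i + δs i)
          = x i * s i + (s i * δx i + x i * δs i) + δx i * δs i := by ring
      rw [h0, hkey1 i, hδμi]
      ring
    have ht'pos : 0 < t' := by
      have : 0 < 1 + 1 / (16 * Real.sqrt n) := by positivity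
      exact lt_of_lt_of_le (by positivity) ht'1
    show Real.sqrt (∑ i, ((x i + δx i) * (s i + δs i) - t')^2) ≤ t'/6
    rw [Finset.sum_congr rfl fun i _ => hres i]
    calc Real.sqrt (∑ i, (δx i * δs i)^2) ≤ Real.sqrt ((t'/6)^2) :=
          Real.sqrt_le_sqrt hfin
      _ = t'/6 := Real.sqrt_sq (by linarith)
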